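/- arXiv:1506.00530 — 3 statements merged into one kernel-verified Lean document; each statement's English description precedes it below -/
import Mathlib

section
/- Lemma 2: let w be a function from the finite subsets of ℤ^d to [0,∞) with w(∅) = 0, let l'' > 0, let g − g' > 0, set 1/l := log 2 + 1/l'', and assume |||w|||_l := sup_{x∈ℤ^d} Σ_{Γ∋x} e^{|Γ|/l} w(Γ) ≤ ε for some ε with 0 < ε < g − g'; put K := (g−g')/(g−g'−ε). Then for every nonempty finite X ⊂ ℤ^d the sum over all n ≥ 1 and over all tuples (Γ_1,…,Γ_n, E_1,…,E_{n+1}) of finite subsets of ℤ^d — with Γ_i and E_i nonempty for 1 ≤ i ≤ n, E_{n+1} possibly empty, satisfying E_1 ⊆ X and, for each 1 ≤ i ≤ n, E_i ∩ Γ_i ≠ ∅ and E_{i+1}∖Γ_i = E_i∖Γ_i — of the products ∏_{i=1}^n e^{|Γ_i|/l''} w(Γ_i) / ((g−g') |E_i|) is summable and bounded above by (K−1) · 2^{|X|}. -/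
noncomputable section
set_option maxHeartbeats 1000000

namespace QMS

/-- A site of the lattice `ℤ^d`. -/
abbrev Site (d : ℕ) : Type := Fin d → ℤ

open scoped ENNReal Classical

def Ind (P : Prop) : ℝ≥0∞ := if P then 1 else 0

lemma Ind_of {P : Prop} (h : P) : Ind P = 1 := if_pos h
lemma Ind_le_one (P : Prop) : Ind P ≤ 1 := by unfold Ind; split <;> simp

lemma tsum_Ind_le {α : Type*} (P : α → Prop) (s : Finset α) (h : ∀ a, P a → a ∈ s) :
    ∑' a, Ind (P a) ≤ (s.card : ℝ≥0∞) := by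
  calc ∑' a, Ind (P a) ≤ ∑' a, Ind (a ∈ s) := by
        refine ENNReal.tsum_le_tsum fun a => ?_
        by_cases hP : P a
        · simp [Ind, hP, h a hP]
        · simp [Ind, hP]
    _ = ∑ a ∈ s, Ind (a ∈ s) := tsum_eq_sum (by intro a ha; simp [Ind, ha])
    _ = ∑ a ∈ s, 1 := Finset.sum_congr rfl (by intro a ha; simp [Ind, ha])
    _ = (s.card : ℝ≥0∞) := by simp

lemma tsum_Ind_mul {α : Type*} (P : α → Prop) (h : α → ℝ≥0∞) :
    ∑' a, Ind (P a) * h a = ∑' a : {a // P a}, h a.1 := by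
  have : ∑' a : {a // P a}, h a.1 = ∑' a : {a : α | P a}, h a.1 := rfl
  rw [this, tsum_subtype {a : α | P a} (fun a => h a)]
  refine tsum_congr fun a => ?_
  by_cases hP : P a <;> simp [Ind, hP, Set.indicator_apply]


variable {d : ℕ}

/-- ENNReal weight. -/
def A (w : Finset (Site d) → ℝ) (l'' : ℝ) (Γ : Finset (Site d)) : ℝ≥0∞ :=
  ENNReal.ofReal (Real.exp ((Γ.card : ℝ) / l'') * w Γ)

/-- The one-step weight. -/
def gStep (w : Finset (Site d) → ℝ) (l'' g g' : ℝ) (E γ e : Finset (Site d)) : ℝ≥0∞ :=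
  Ind E.Nonempty * Ind (E ∩ γ).Nonempty * Ind (e \ γ = E \ γ) *
    (A w l'' γ / (ENNReal.ofReal (g - g') * (E.card : ℝ≥0∞)))

lemma keyA (w : Finset (Site d) → ℝ) (hw : ∀ Γ, 0 ≤ w Γ) (l'' l ε : ℝ)
    (hl : 1 / l = Real.log 2 + 1 / l'')
    (hsummable : ∀ x : Site d, Summable fun Γ : {Γ : Finset (Site d) // x ∈ Γ} =>
      Real.exp ((Γ.1.card : ℝ) / l) * w Γ.1)
    (hnorm : ∀ x : Site d,
      (∑' Γ : {Γ : Finset (Site d) // x ∈ Γ}, Real.exp ((Γ.1.card : ℝ) / l) * w Γ.1) ≤ ε)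
    (x : Site d) :
    ∑' γ : {γ : Finset (Site d) // x ∈ γ}, (2 : ℝ≥0∞) ^ γ.1.card * A w l'' γ.1 ≤
      ENNReal.ofReal ε := by
  have key : ∀ γ : Finset (Site d), (2 : ℝ≥0∞) ^ γ.card * A w l'' γ =
      ENNReal.ofReal (Real.exp ((γ.card : ℝ) / l) * w γ) := by
    intro γ
    have h2 : Real.exp ((γ.card : ℝ) / l) = 2 ^ γ.card * Real.exp ((γ.card : ℝ) / l'') := by
      rw [show ((γ.card : ℝ)) / l = (γ.card : ℝ) * (1 / l) by ring, hl, mul_add, Real.exp_add,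
        show ((γ.card : ℝ)) * (1 / l'') = (γ.card : ℝ) / l'' by ring,
        show ((γ.card : ℝ)) * Real.log 2 = ((γ.card : ℕ) : ℝ) * Real.log 2 by norm_num,
        Real.exp_nat_mul, Real.exp_log (by norm_num : (0:ℝ) < 2)]
    have h3 : (2 : ℝ≥0∞) ^ γ.card = ENNReal.ofReal ((2:ℝ) ^ γ.card) := by
      rw [ENNReal.ofReal_pow (by norm_num : (0:ℝ) ≤ 2)]; norm_num
    rw [A, h3, ← ENNReal.ofReal_mul (by positivity), h2]
    congr 1
    ring
  calc ∑' γ : {γ : Finset (Site d) // x ∈ γ}, (2 : ℝ≥0∞) ^ γ.1.card * A w l'' γ.1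
      = ∑' γ : {γ : Finset (Site d) // x ∈ γ},
          ENNReal.ofReal (Real.exp ((γ.1.card : ℝ) / l) * w γ.1) :=
        tsum_congr fun γ => key γ.1
    _ = ENNReal.ofReal (∑' γ : {γ : Finset (Site d) // x ∈ γ},
          Real.exp ((γ.1.card : ℝ) / l) * w γ.1) :=
        (ENNReal.ofReal_tsum_of_nonneg (fun γ => mul_nonneg (Real.exp_pos _).le (hw _)) (hsummable x)).symm
    _ ≤ ENNReal.ofReal ε := ENNReal.ofReal_le_ofReal (hnorm x)

lemma keyB (w : Finset (Site d) → ℝ) (hw : ∀ Γ, 0 ≤ w Γ) (l'' l ε : ℝ)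
    (hl : 1 / l = Real.log 2 + 1 / l'')
    (hsummable : ∀ x : Site d, Summable fun Γ : {Γ : Finset (Site d) // x ∈ Γ} =>
      Real.exp ((Γ.1.card : ℝ) / l) * w Γ.1)
    (hnorm : ∀ x : Site d,
      (∑' Γ : {Γ : Finset (Site d) // x ∈ Γ}, Real.exp ((Γ.1.card : ℝ) / l) * w Γ.1) ≤ ε)
    (E : Finset (Site d)) :
    ∑' γ : Finset (Site d), Ind (E ∩ γ).Nonempty * ((2 : ℝ≥0∞) ^ γ.card * A w l'' γ) ≤
      (E.card : ℝ≥0∞) * ENNReal.ofReal ε := by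
  rw [tsum_Ind_mul]
  set i : {γ : Finset (Site d) // (E ∩ γ).Nonempty} →
      Σ x : {x // x ∈ E}, {γ : Finset (Site d) // x.1 ∈ γ} :=
    fun γ => ⟨⟨γ.2.choose, (Finset.mem_inter.1 γ.2.choose_spec).1⟩,
      ⟨γ.1, (Finset.mem_inter.1 γ.2.choose_spec).2⟩⟩ with hi_def
  have hi : Function.Injective i := by
    intro a b hab
    have := congrArg (fun q : Σ x : {x // x ∈ E}, {γ : Finset (Site d) // x.1 ∈ γ} =>
      (q.2.1 : Finset (Site d))) hab
    exact Subtype.ext this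
  calc ∑' γ : {γ : Finset (Site d) // (E ∩ γ).Nonempty}, (2 : ℝ≥0∞) ^ γ.1.card * A w l'' γ.1
      = ∑' γ : {γ : Finset (Site d) // (E ∩ γ).Nonempty},
          (fun q : Σ x : {x // x ∈ E}, {γ : Finset (Site d) // x.1 ∈ γ} =>
            (2 : ℝ≥0∞) ^ q.2.1.card * A w l'' q.2.1) (i γ) := rfl
    _ ≤ ∑' q : Σ x : {x // x ∈ E}, {γ : Finset (Site d) // x.1 ∈ γ},
          (2 : ℝ≥0∞) ^ q.2.1.card * A w l'' q.2.1 := ENNReal.tsum_comp_le_tsum_of_injective hi _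
    _ = ∑' x : {x // x ∈ E}, ∑' γ : {γ : Finset (Site d) // x.1 ∈ γ},
          (2 : ℝ≥0∞) ^ γ.1.card * A w l'' γ.1 :=
        ENNReal.tsum_sigma' (fun q : Σ x : {x // x ∈ E}, {γ : Finset (Site d) // x.1 ∈ γ} =>
          (2 : ℝ≥0∞) ^ q.2.1.card * A w l'' q.2.1)
    _ ≤ ∑' _ : {x // x ∈ E}, ENNReal.ofReal ε :=
        ENNReal.tsum_le_tsum fun x => keyA w hw l'' l ε hl hsummable hnorm x.1
    _ = (E.card : ℝ≥0∞) * ENNReal.ofReal ε := by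
        rw [tsum_fintype]
        simp [Finset.card_univ]

lemma countE (E γ : Finset (Site d)) :
    ∑' e : Finset (Site d), Ind (e \ γ = E \ γ) ≤ (2 : ℝ≥0∞) ^ γ.card := by
  calc ∑' e : Finset (Site d), Ind (e \ γ = E \ γ)
      ≤ ((γ.powerset.image (fun S => (E \ γ) ∪ S)).card : ℝ≥0∞) := by
        refine tsum_Ind_le _ _ fun e he => ?_
        refine Finset.mem_image.2 ⟨e ∩ γ, Finset.mem_powerset.2 Finset.inter_subset_right, ?_⟩
        ext x
        have hx : x ∈ e \ γ ↔ x ∈ E \ γ := by rw [he]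
        simp only [Finset.mem_sdiff] at hx
        simp only [Finset.mem_union, Finset.mem_sdiff, Finset.mem_inter]
        by_cases hγ : x ∈ γ <;> tauto
    _ ≤ ((γ.powerset.card : ℕ) : ℝ≥0∞) := by exact_mod_cast Nat.cast_le.2 Finset.card_image_le
    _ = (2 : ℝ≥0∞) ^ γ.card := by rw [Finset.card_powerset]; push_cast; ring


lemma stepBound (w : Finset (Site d) → ℝ) (hw : ∀ Γ, 0 ≤ w Γ) (l'' l g g' ε : ℝ)
    (hgg' : g' < g)
    (hl : 1 / l = Real.log 2 + 1 / l'')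
    (hsummable : ∀ x : Site d, Summable fun Γ : {Γ : Finset (Site d) // x ∈ Γ} =>
      Real.exp ((Γ.1.card : ℝ) / l) * w Γ.1)
    (hnorm : ∀ x : Site d,
      (∑' Γ : {Γ : Finset (Site d) // x ∈ Γ}, Real.exp ((Γ.1.card : ℝ) / l) * w Γ.1) ≤ ε)
    (E : Finset (Site d)) :
    ∑' γ : Finset (Site d), ∑' e : Finset (Site d), gStep w l'' g g' E γ e ≤
      ENNReal.ofReal ε / ENNReal.ofReal (g - g') := by
  by_cases hE : E.Nonempty
  · have h1 : ∀ γ : Finset (Site d), ∑' e : Finset (Site d), gStep w l'' g g' E γ e ≤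
        Ind (E ∩ γ).Nonempty * ((2 : ℝ≥0∞) ^ γ.card * A w l'' γ) /
          (ENNReal.ofReal (g - g') * (E.card : ℝ≥0∞)) := by
      intro γ
      have : ∀ e : Finset (Site d), gStep w l'' g g' E γ e =
          (Ind (E ∩ γ).Nonempty * (A w l'' γ /
            (ENNReal.ofReal (g - g') * (E.card : ℝ≥0∞)))) * Ind (e \ γ = E \ γ) := by
        intro e
        rw [gStep, Ind_of hE]
        ring
      rw [tsum_congr this, ENNReal.tsum_mul_left]
      calc Ind (E ∩ γ).Nonempty * (A w l'' γ /
            (ENNReal.ofReal (g - g') * (E.card : ℝ≥0∞))) * (∑' e, Ind (e \ γ = E \ γ))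
          ≤ Ind (E ∩ γ).Nonempty * (A w l'' γ /
            (ENNReal.ofReal (g - g') * (E.card : ℝ≥0∞))) * (2 : ℝ≥0∞) ^ γ.card :=
            mul_le_mul_right (countE E γ) _
        _ = Ind (E ∩ γ).Nonempty * ((2 : ℝ≥0∞) ^ γ.card * A w l'' γ) /
            (ENNReal.ofReal (g - g') * (E.card : ℝ≥0∞)) := by
            rw [mul_div_assoc, mul_div_assoc]
            ring
    calc ∑' γ : Finset (Site d), ∑' e : Finset (Site d), gStep w l'' g g' E γ e
        ≤ ∑' γ : Finset (Site d), Ind (E ∩ γ).Nonempty *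
            ((2 : ℝ≥0∞) ^ γ.card * A w l'' γ) /
            (ENNReal.ofReal (g - g') * (E.card : ℝ≥0∞)) := ENNReal.tsum_le_tsum h1
      _ = (∑' γ : Finset (Site d), Ind (E ∩ γ).Nonempty *
            ((2 : ℝ≥0∞) ^ γ.card * A w l'' γ)) /
            (ENNReal.ofReal (g - g') * (E.card : ℝ≥0∞)) := by
          simp only [div_eq_mul_inv, ENNReal.tsum_mul_right]
      _ ≤ ((E.card : ℝ≥0∞) * ENNReal.ofReal ε) /
            (ENNReal.ofReal (g - g') * (E.card : ℝ≥0∞)) :=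
          ENNReal.div_le_div_right (keyB w hw l'' l ε hl hsummable hnorm E) _
      _ = ENNReal.ofReal ε / ENNReal.ofReal (g - g') := by
          rw [mul_comm (ENNReal.ofReal (g - g')) (E.card : ℝ≥0∞),
            ENNReal.mul_div_mul_left _ _ (by exact_mod_cast Finset.card_ne_zero.2 hE)
              (ENNReal.natCast_ne_top _)]
  · have : ∀ γ e : Finset (Site d), gStep w l'' g g' E γ e = 0 := by
      intro γ e; rw [gStep]; simp [Ind, hE]
    simp [this]

/-- Full weight of an `n`-chain. -/
def Ftil (w : Finset (Site d) → ℝ) (l'' g g' : ℝ) (X : Finset (Site d)) (n : ℕ)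
    (Γ : Fin (n+1) → Finset (Site d)) (E : Fin (n+2) → Finset (Site d)) : ℝ≥0∞ :=
  Ind (E 0 ⊆ X) * ∏ i : Fin (n+1), gStep w l'' g g' (E i.castSucc) (Γ i) (E i.succ)

def SN (w : Finset (Site d) → ℝ) (l'' g g' : ℝ) (X : Finset (Site d)) (n : ℕ) : ℝ≥0∞ :=
  ∑' q : (Fin (n+1) → Finset (Site d)) × (Fin (n+2) → Finset (Site d)),
    Ftil w l'' g g' X n q.1 q.2

lemma Ftil_snoc (w : Finset (Site d) → ℝ) (l'' g g' : ℝ) (X : Finset (Site d)) (n : ℕ)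
    (Γ' : Fin (n+1) → Finset (Site d)) (γ : Finset (Site d))
    (E' : Fin (n+2) → Finset (Site d)) (e : Finset (Site d)) :
    Ftil w l'' g g' X (n+1) (Fin.snoc Γ' γ) (Fin.snoc E' e) =
      Ftil w l'' g g' X n Γ' E' * gStep w l'' g g' (E' (Fin.last (n+1))) γ e := by
  rw [Ftil, Ftil, Fin.prod_univ_castSucc]
  have h0 : (Fin.snoc E' e : Fin (n+3) → Finset (Site d)) 0 = E' 0 := by
    rw [show (0 : Fin (n+3)) = Fin.castSucc 0 by rfl, Fin.snoc_castSucc]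
  have hterm : ∀ i : Fin (n+1),
      gStep w l'' g g' ((Fin.snoc E' e : Fin (n+3) → _) i.castSucc.castSucc)
        ((Fin.snoc Γ' γ : Fin (n+2) → _) i.castSucc)
        ((Fin.snoc E' e : Fin (n+3) → _) i.castSucc.succ) =
      gStep w l'' g g' (E' i.castSucc) (Γ' i) (E' i.succ) := by
    intro i
    rw [Fin.snoc_castSucc, Fin.snoc_castSucc, Fin.succ_castSucc, Fin.snoc_castSucc]
  have hlast :
      gStep w l'' g g' ((Fin.snoc E' e : Fin (n+3) → _) (Fin.last (n+1)).castSucc)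
        ((Fin.snoc Γ' γ : Fin (n+2) → _) (Fin.last (n+1)))
        ((Fin.snoc E' e : Fin (n+3) → _) (Fin.last (n+1)).succ) =
      gStep w l'' g g' (E' (Fin.last (n+1))) γ e := by
    rw [Fin.snoc_castSucc, Fin.snoc_last, Fin.succ_last, Fin.snoc_last]
  rw [h0, Finset.prod_congr rfl (fun i _ => hterm i), hlast]
  ring


lemma SN_succ (w : Finset (Site d) → ℝ) (hw : ∀ Γ, 0 ≤ w Γ) (l'' l g g' ε : ℝ)
    (hgg' : g' < g)
    (hl : 1 / l = Real.log 2 + 1 / l'')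
    (hsummable : ∀ x : Site d, Summable fun Γ : {Γ : Finset (Site d) // x ∈ Γ} =>
      Real.exp ((Γ.1.card : ℝ) / l) * w Γ.1)
    (hnorm : ∀ x : Site d,
      (∑' Γ : {Γ : Finset (Site d) // x ∈ Γ}, Real.exp ((Γ.1.card : ℝ) / l) * w Γ.1) ≤ ε)
    (X : Finset (Site d)) (n : ℕ) :
    SN w l'' g g' X (n+1) ≤ SN w l'' g g' X n * (ENNReal.ofReal ε / ENNReal.ofReal (g - g')) := by
  classical
  let β := Finset (Site d)
  -- reindex by snoc on both components
  let e1 : (β × (Fin (n+1) → β)) × (β × (Fin (n+2) → β)) ≃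
      ((Fin (n+2) → β) × (Fin (n+3) → β)) :=
    Equiv.prodCongr (Fin.snocEquiv (fun _ => β)) (Fin.snocEquiv (fun _ => β))
  have h1 : SN w l'' g g' X (n+1) =
      ∑' q : (β × (Fin (n+1) → β)) × (β × (Fin (n+2) → β)),
        Ftil w l'' g g' X n q.1.2 q.2.2 *
          gStep w l'' g g' (q.2.2 (Fin.last (n+1))) q.1.1 q.2.1 := by
    rw [SN, ← e1.tsum_eq]
    exact tsum_congr fun q => Ftil_snoc w l'' g g' X n q.1.2 q.1.1 q.2.2 q.2.1
  rw [h1]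
  let e2 : ((Fin (n+1) → β) × (Fin (n+2) → β)) × (β × β) ≃
      (β × (Fin (n+1) → β)) × (β × (Fin (n+2) → β)) :=
    (Equiv.prodProdProdComm (Fin (n+1) → β) β (Fin (n+2) → β) β).symm.trans
      (Equiv.prodCongr (Equiv.prodComm _ _) (Equiv.prodComm _ _))
  rw [← e2.tsum_eq]
  have h2 : ∀ q : ((Fin (n+1) → β) × (Fin (n+2) → β)) × (β × β),
      (fun p : (β × (Fin (n+1) → β)) × (β × (Fin (n+2) → β)) =>
        Ftil w l'' g g' X n p.1.2 p.2.2 *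
          gStep w l'' g g' (p.2.2 (Fin.last (n+1))) p.1.1 p.2.1) (e2 q) =
      Ftil w l'' g g' X n q.1.1 q.1.2 *
        gStep w l'' g g' (q.1.2 (Fin.last (n+1))) q.2.1 q.2.2 := by
    intro q; rfl
  rw [tsum_congr h2, ENNReal.tsum_prod']
  calc ∑' (q1 : (Fin (n+1) → β) × (Fin (n+2) → β)) (q2 : β × β),
        Ftil w l'' g g' X n q1.1 q1.2 *
          gStep w l'' g g' (q1.2 (Fin.last (n+1))) q2.1 q2.2
      = ∑' q1 : (Fin (n+1) → β) × (Fin (n+2) → β),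
          Ftil w l'' g g' X n q1.1 q1.2 *
            ∑' q2 : β × β, gStep w l'' g g' (q1.2 (Fin.last (n+1))) q2.1 q2.2 := by
        refine tsum_congr fun q1 => ?_
        rw [ENNReal.tsum_mul_left]
    _ ≤ ∑' q1 : (Fin (n+1) → β) × (Fin (n+2) → β),
          Ftil w l'' g g' X n q1.1 q1.2 * (ENNReal.ofReal ε / ENNReal.ofReal (g - g')) := by
        refine ENNReal.tsum_le_tsum fun q1 => mul_le_mul_right ?_ _
        rw [ENNReal.tsum_prod]
        exact stepBound w hw l'' l g g' ε hgg' hl hsummable hnorm _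
    _ = SN w l'' g g' X n * (ENNReal.ofReal ε / ENNReal.ofReal (g - g')) := by
        rw [SN, ENNReal.tsum_mul_right]


lemma SN_zero (w : Finset (Site d) → ℝ) (hw : ∀ Γ, 0 ≤ w Γ) (l'' l g g' ε : ℝ)
    (hgg' : g' < g)
    (hl : 1 / l = Real.log 2 + 1 / l'')
    (hsummable : ∀ x : Site d, Summable fun Γ : {Γ : Finset (Site d) // x ∈ Γ} =>
      Real.exp ((Γ.1.card : ℝ) / l) * w Γ.1)
    (hnorm : ∀ x : Site d,
      (∑' Γ : {Γ : Finset (Site d) // x ∈ Γ}, Real.exp ((Γ.1.card : ℝ) / l) * w Γ.1) ≤ ε)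
    (X : Finset (Site d)) :
    SN w l'' g g' X 0 ≤
      (2 : ℝ≥0∞) ^ X.card * (ENNReal.ofReal ε / ENNReal.ofReal (g - g')) := by
  classical
  let β := Finset (Site d)
  let e1 : β × (β × β) ≃ ((Fin 1 → β) × (Fin 2 → β)) :=
    Equiv.prodCongr (Equiv.funUnique (Fin 1) β).symm (piFinTwoEquiv (fun _ => β)).symm
  have h1 : SN w l'' g g' X 0 =
      ∑' q : β × (β × β), Ind (q.2.1 ⊆ X) * gStep w l'' g g' q.2.1 q.1 q.2.2 := by
    rw [SN, ← e1.tsum_eq]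
    refine tsum_congr fun q => ?_
    show Ftil w l'' g g' X 0 (fun _ => q.1) (fun i => ![q.2.1, q.2.2] i) = _
    rw [Ftil, Fin.prod_univ_one]
    norm_num
  rw [h1, ENNReal.tsum_prod']
  rw [ENNReal.tsum_comm]
  calc ∑' (b : β × β) (a : β), Ind (b.1 ⊆ X) * gStep w l'' g g' b.1 a b.2
      = ∑' (e0 : β) (e2 : β) (γ : β), Ind (e0 ⊆ X) * gStep w l'' g g' e0 γ e2 := by
        rw [ENNReal.tsum_prod']
    _ = ∑' (e0 : β), Ind (e0 ⊆ X) * ∑' (γ : β) (e2 : β), gStep w l'' g g' e0 γ e2 := by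
        refine tsum_congr fun e0 => ?_
        rw [ENNReal.tsum_comm, tsum_congr fun b => ENNReal.tsum_mul_left,
          ENNReal.tsum_mul_left]
    _ ≤ ∑' (e0 : β), Ind (e0 ⊆ X) * (ENNReal.ofReal ε / ENNReal.ofReal (g - g')) := by
        refine ENNReal.tsum_le_tsum fun e0 => mul_le_mul_right ?_ _
        exact stepBound w hw l'' l g g' ε hgg' hl hsummable hnorm e0
    _ = (∑' (e0 : β), Ind (e0 ⊆ X)) * (ENNReal.ofReal ε / ENNReal.ofReal (g - g')) :=
        ENNReal.tsum_mul_right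
    _ ≤ (2 : ℝ≥0∞) ^ X.card * (ENNReal.ofReal ε / ENNReal.ofReal (g - g')) := by
        refine mul_le_mul_left ?_ _
        calc ∑' (e0 : β), Ind (e0 ⊆ X) ≤ (X.powerset.card : ℝ≥0∞) :=
              tsum_Ind_le _ _ fun e0 he => Finset.mem_powerset.2 he
          _ = (2 : ℝ≥0∞) ^ X.card := by rw [Finset.card_powerset]; push_cast; ring

lemma SN_le (w : Finset (Site d) → ℝ) (hw : ∀ Γ, 0 ≤ w Γ) (l'' l g g' ε : ℝ)
    (hgg' : g' < g)
    (hl : 1 / l = Real.log 2 + 1 / l'')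
    (hsummable : ∀ x : Site d, Summable fun Γ : {Γ : Finset (Site d) // x ∈ Γ} =>
      Real.exp ((Γ.1.card : ℝ) / l) * w Γ.1)
    (hnorm : ∀ x : Site d,
      (∑' Γ : {Γ : Finset (Site d) // x ∈ Γ}, Real.exp ((Γ.1.card : ℝ) / l) * w Γ.1) ≤ ε)
    (X : Finset (Site d)) (n : ℕ) :
    SN w l'' g g' X n ≤
      (2 : ℝ≥0∞) ^ X.card * (ENNReal.ofReal ε / ENNReal.ofReal (g - g')) ^ (n + 1) := by
  induction n with
  | zero => simpa using SN_zero w hw l'' l g g' ε hgg' hl hsummable hnorm X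
  | succ n ih =>
      calc SN w l'' g g' X (n+1) ≤
          SN w l'' g g' X n * (ENNReal.ofReal ε / ENNReal.ofReal (g - g')) :=
            SN_succ w hw l'' l g g' ε hgg' hl hsummable hnorm X n
        _ ≤ (2 : ℝ≥0∞) ^ X.card * (ENNReal.ofReal ε / ENNReal.ofReal (g - g')) ^ (n + 1) *
              (ENNReal.ofReal ε / ENNReal.ofReal (g - g')) := mul_le_mul_left ih _
        _ = (2 : ℝ≥0∞) ^ X.card * (ENNReal.ofReal ε / ENNReal.ofReal (g - g')) ^ (n + 2) := by
            rw [mul_assoc, ← pow_succ]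


lemma geom_total (g g' ε : ℝ) (hgg' : g' < g) (hε : 0 < ε) (hεg : ε < g - g') :
    ∑' n : ℕ, (ENNReal.ofReal ε / ENNReal.ofReal (g - g')) ^ (n + 1) =
      ENNReal.ofReal (ε / (g - g' - ε)) := by
  have hgg0 : (0:ℝ) < g - g' := sub_pos.2 hgg'
  have hden : (0:ℝ) < g - g' - ε := by linarith
  have hr : ENNReal.ofReal ε / ENNReal.ofReal (g - g') = ENNReal.ofReal (ε / (g - g')) :=
    (ENNReal.ofReal_div_of_pos hgg0).symm
  set ρ : ℝ := ε / (g - g') with hρ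
  have hρ0 : 0 ≤ ρ := by positivity
  have hρ1 : ρ < 1 := (div_lt_one hgg0).2 (by linarith)
  calc ∑' n : ℕ, (ENNReal.ofReal ε / ENNReal.ofReal (g - g')) ^ (n + 1)
      = ∑' n : ℕ, ENNReal.ofReal ρ * ENNReal.ofReal ρ ^ n := by
        refine tsum_congr fun n => ?_
        rw [hr, pow_succ, mul_comm]
    _ = ENNReal.ofReal ρ * (1 - ENNReal.ofReal ρ)⁻¹ := by
        rw [ENNReal.tsum_mul_left, ENNReal.tsum_geometric]
    _ = ENNReal.ofReal (ε / (g - g' - ε)) := by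
        have h1 : (1 : ℝ≥0∞) - ENNReal.ofReal ρ = ENNReal.ofReal (1 - ρ) := by
          rw [ENNReal.ofReal_sub 1 hρ0, ENNReal.ofReal_one]
        rw [h1, ← ENNReal.ofReal_inv_of_pos (by linarith), ← ENNReal.ofReal_mul hρ0]
        congr 1
        rw [hρ]
        field_simp

lemma tuple_le (w : Finset (Site d) → ℝ) (hw : ∀ Γ, 0 ≤ w Γ) (l'' g g' : ℝ)
    (hgg' : g' < g) (X : Finset (Site d))
    (p : {p : (n : ℕ) × ((Fin (n + 1) → Finset (Site d)) × (Fin (n + 2) → Finset (Site d))) //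
      (∀ i, (p.2.1 i).Nonempty) ∧
      (∀ i : Fin (p.1 + 1), (p.2.2 i.castSucc).Nonempty) ∧
      p.2.2 0 ⊆ X ∧
      (∀ i : Fin (p.1 + 1), (p.2.2 i.castSucc ∩ p.2.1 i).Nonempty) ∧
      (∀ i : Fin (p.1 + 1), p.2.2 i.succ \ p.2.1 i = p.2.2 i.castSucc \ p.2.1 i)}) :
    ENNReal.ofReal (∏ i : Fin (p.1.1 + 1),
        Real.exp ((p.1.2.1 i).card / l'') * w (p.1.2.1 i) /
          ((g - g') * ((p.1.2.2 i.castSucc).card : ℝ))) ≤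
      Ftil w l'' g g' X p.1.1 p.1.2.1 p.1.2.2 := by
  obtain ⟨⟨n, Γ, E⟩, hΓ, hE, hX, hint, hdiff⟩ := p
  have hgg0 : (0:ℝ) < g - g' := sub_pos.2 hgg'
  simp only at hΓ hE hX hint hdiff ⊢
  rw [ENNReal.ofReal_prod_of_nonneg (fun i _ =>
    div_nonneg (mul_nonneg (Real.exp_pos _).le (hw _))
      (mul_nonneg hgg0.le (Nat.cast_nonneg _)))]
  rw [Ftil, Ind_of hX, one_mul]
  refine Finset.prod_le_prod' fun i _ => ?_
  have hm : (0:ℝ) < ((E i.castSucc).card : ℝ) := by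
    exact_mod_cast (hE i).card_pos
  rw [gStep, Ind_of (hE i), Ind_of (hint i), Ind_of (hdiff i), one_mul, one_mul, one_mul]
  rw [A, ENNReal.ofReal_div_of_pos (mul_pos hgg0 hm), ENNReal.ofReal_mul hgg0.le,
    ENNReal.ofReal_natCast]


/-- The labels of the expansion: a number `p.1 + 1 ≥ 1` of sets `Γ_1, …, Γ_n` together
with sets `E_1, …, E_{n+1}` (with `Γ_i, E_i` nonempty for `i ≤ n`, `E_{n+1}` arbitrary),
satisfying the compatibility constraints of observation (i): `E_1 ⊆ X`, and for every
`1 ≤ i ≤ n` one has `E_i ∩ Γ_i ≠ ∅` and `E_{i+1} ∖ Γ_i = E_i ∖ Γ_i`. -/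
def Tuples (d : ℕ) (X : Finset (Site d)) : Type :=
  {p : (n : ℕ) × ((Fin (n + 1) → Finset (Site d)) × (Fin (n + 2) → Finset (Site d))) //
    (∀ i, (p.2.1 i).Nonempty) ∧
    (∀ i : Fin (p.1 + 1), (p.2.2 i.castSucc).Nonempty) ∧
    p.2.2 0 ⊆ X ∧
    (∀ i : Fin (p.1 + 1), (p.2.2 i.castSucc ∩ p.2.1 i).Nonempty) ∧
    (∀ i : Fin (p.1 + 1), p.2.2 i.succ \ p.2.1 i = p.2.2 i.castSucc \ p.2.1 i) }

/-- Lemma 2: geometric summability of the expansion weights. -/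
theorem lemma_two (d : ℕ) (hd : 1 ≤ d)
    (w : Finset (Site d) → ℝ) (hw : ∀ Γ, 0 ≤ w Γ) (hwempty : w ∅ = 0)
    (l'' l g g' ε : ℝ) (hl'' : 0 < l'') (hgg' : g' < g)
    (hl : 1 / l = Real.log 2 + 1 / l'')
    (hε : 0 < ε) (hεg : ε < g - g')
    (hsummable : ∀ x : Site d, Summable fun Γ : {Γ : Finset (Site d) // x ∈ Γ} =>
      Real.exp ((Γ.1.card : ℝ) / l) * w Γ.1)
    (hnorm : ∀ x : Site d,
      (∑' Γ : {Γ : Finset (Site d) // x ∈ Γ}, Real.exp ((Γ.1.card : ℝ) / l) * w Γ.1) ≤ ε) :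
    ∀ X : Finset (Site d), X.Nonempty →
      Summable (fun p : Tuples d X =>
        ∏ i : Fin (p.1.1 + 1),
          Real.exp ((p.1.2.1 i).card / l'') * w (p.1.2.1 i) /
            ((g - g') * ((p.1.2.2 i.castSucc).card : ℝ))) ∧
      (∑' p : Tuples d X,
        ∏ i : Fin (p.1.1 + 1),
          Real.exp ((p.1.2.1 i).card / l'') * w (p.1.2.1 i) /
            ((g - g') * ((p.1.2.2 i.castSucc).card : ℝ))) ≤
        ((g - g') / (g - g' - ε) - 1) * 2 ^ X.card := by
  intro X hXne
  have hgg0 : (0:ℝ) < g - g' := sub_pos.2 hgg'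
  have hden : (0:ℝ) < g - g' - ε := by linarith
  have hf0 : ∀ p : Tuples d X, 0 ≤ ∏ i : Fin (p.1.1 + 1),
      Real.exp ((p.1.2.1 i).card / l'') * w (p.1.2.1 i) /
        ((g - g') * ((p.1.2.2 i.castSucc).card : ℝ)) := fun p =>
    Finset.prod_nonneg fun i _ =>
      div_nonneg (mul_nonneg (Real.exp_pos _).le (hw _))
        (mul_nonneg hgg0.le (Nat.cast_nonneg _))
  have hcomp : (∑' p : Tuples d X, ENNReal.ofReal (∏ i : Fin (p.1.1 + 1),
      Real.exp ((p.1.2.1 i).card / l'') * w (p.1.2.1 i) /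
        ((g - g') * ((p.1.2.2 i.castSucc).card : ℝ)))) ≤
      ∑' n : ℕ, SN w l'' g g' X n := by
    calc (∑' p : Tuples d X, ENNReal.ofReal (∏ i : Fin (p.1.1 + 1),
        Real.exp ((p.1.2.1 i).card / l'') * w (p.1.2.1 i) /
          ((g - g') * ((p.1.2.2 i.castSucc).card : ℝ))))
        ≤ ∑' p : Tuples d X,
            (fun q : (n : ℕ) × ((Fin (n + 1) → Finset (Site d)) × (Fin (n + 2) → Finset (Site d)))
              => Ftil w l'' g g' X q.1 q.2.1 q.2.2) p.1 :=
          ENNReal.tsum_le_tsum fun p => tuple_le w hw l'' g g' hgg' X p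
      _ ≤ ∑' q : (n : ℕ) × ((Fin (n + 1) → Finset (Site d)) × (Fin (n + 2) → Finset (Site d))),
            Ftil w l'' g g' X q.1 q.2.1 q.2.2 :=
          ENNReal.tsum_comp_le_tsum_of_injective Subtype.val_injective _
      _ = ∑' n : ℕ, SN w l'' g g' X n := by
          rw [ENNReal.tsum_sigma'
            (fun q : (n : ℕ) × ((Fin (n + 1) → Finset (Site d)) × (Fin (n + 2) → Finset (Site d)))
              => Ftil w l'' g g' X q.1 q.2.1 q.2.2)]
          exact tsum_congr fun n => rfl
  have htot : (∑' n : ℕ, SN w l'' g g' X n) ≤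
      (2 : ℝ≥0∞) ^ X.card * ENNReal.ofReal (ε / (g - g' - ε)) := by
    calc (∑' n : ℕ, SN w l'' g g' X n)
        ≤ ∑' n : ℕ, (2 : ℝ≥0∞) ^ X.card *
            (ENNReal.ofReal ε / ENNReal.ofReal (g - g')) ^ (n + 1) :=
          ENNReal.tsum_le_tsum fun n => SN_le w hw l'' l g g' ε hgg' hl hsummable hnorm X n
      _ = (2 : ℝ≥0∞) ^ X.card *
            ∑' n : ℕ, (ENNReal.ofReal ε / ENNReal.ofReal (g - g')) ^ (n + 1) :=
          ENNReal.tsum_mul_left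
      _ = (2 : ℝ≥0∞) ^ X.card * ENNReal.ofReal (ε / (g - g' - ε)) := by
          rw [geom_total g g' ε hgg' hε hεg]
  have hB0 : (0:ℝ) ≤ ((g - g') / (g - g' - ε) - 1) * 2 ^ X.card := by
    have h1 : (1:ℝ) ≤ (g - g') / (g - g' - ε) := (one_le_div hden).2 (by linarith)
    have : (0:ℝ) ≤ (2:ℝ) ^ X.card := by positivity
    nlinarith
  have hBeq : (2 : ℝ≥0∞) ^ X.card * ENNReal.ofReal (ε / (g - g' - ε)) =
      ENNReal.ofReal (((g - g') / (g - g' - ε) - 1) * 2 ^ X.card) := by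
    have hK : (g - g') / (g - g' - ε) - 1 = ε / (g - g' - ε) := by
      field_simp
      ring
    rw [hK, ENNReal.ofReal_mul (by positivity), mul_comm]
    congr 1
    rw [ENNReal.ofReal_pow (by norm_num : (0:ℝ) ≤ 2)]
    norm_num
  have hle : (∑' p : Tuples d X, ENNReal.ofReal (∏ i : Fin (p.1.1 + 1),
      Real.exp ((p.1.2.1 i).card / l'') * w (p.1.2.1 i) /
        ((g - g') * ((p.1.2.2 i.castSucc).card : ℝ)))) ≤
      ENNReal.ofReal (((g - g') / (g - g' - ε) - 1) * 2 ^ X.card) :=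
    hBeq ▸ (hcomp.trans htot)
  have hne : (∑' p : Tuples d X, ENNReal.ofReal (∏ i : Fin (p.1.1 + 1),
      Real.exp ((p.1.2.1 i).card / l'') * w (p.1.2.1 i) /
        ((g - g') * ((p.1.2.2 i.castSucc).card : ℝ)))) ≠ ⊤ :=
    (lt_of_le_of_lt hle ENNReal.ofReal_lt_top).ne
  have heq : (fun p : Tuples d X => (ENNReal.ofReal (∏ i : Fin (p.1.1 + 1),
      Real.exp ((p.1.2.1 i).card / l'') * w (p.1.2.1 i) /
        ((g - g') * ((p.1.2.2 i.castSucc).card : ℝ)))).toReal) =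
      (fun p : Tuples d X => ∏ i : Fin (p.1.1 + 1),
        Real.exp ((p.1.2.1 i).card / l'') * w (p.1.2.1 i) /
          ((g - g') * ((p.1.2.2 i.castSucc).card : ℝ))) :=
    funext fun p => ENNReal.toReal_ofReal (hf0 p)
  constructor
  · exact heq ▸ ENNReal.summable_toReal hne
  · have h2 : (∑' p : Tuples d X, ∏ i : Fin (p.1.1 + 1),
        Real.exp ((p.1.2.1 i).card / l'') * w (p.1.2.1 i) /
          ((g - g') * ((p.1.2.2 i.castSucc).card : ℝ))) =
        (∑' p : Tuples d X, ENNReal.ofReal (∏ i : Fin (p.1.1 + 1),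
          Real.exp ((p.1.2.1 i).card / l'') * w (p.1.2.1 i) /
            ((g - g') * ((p.1.2.2 i.castSucc).card : ℝ)))).toReal := by
      rw [ENNReal.tsum_toReal_eq (fun p => ENNReal.ofReal_ne_top)]
      exact tsum_congr fun p => (ENNReal.toReal_ofReal (hf0 p)).symm
    rw [h2]
    calc (∑' p : Tuples d X, ENNReal.ofReal (∏ i : Fin (p.1.1 + 1),
          Real.exp ((p.1.2.1 i).card / l'') * w (p.1.2.1 i) /
            ((g - g') * ((p.1.2.2 i.castSucc).card : ℝ)))).toReal
        ≤ (ENNReal.ofReal (((g - g') / (g - g' - ε) - 1) * 2 ^ X.card)).toReal :=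
          ENNReal.toReal_mono ENNReal.ofReal_ne_top hle
      _ = ((g - g') / (g - g' - ε) - 1) * 2 ^ X.card := ENNReal.toReal_ofReal hB0


end QMS
end
end

section
/- Exponential relaxation of the non-interacting product dynamics: for each x let ρ_x be the linear functional on A_{{x}} determined by Q(x)(B) = ρ_x(B)·1, and for a nonempty finite X ⊂ ℤ^d let ρ_{G,X} be the linear functional on A_X determined by (∏_{x∈X} Q(x))(A) = ρ_{G,X}(A)·1. Then for every t ≥ 0 and every A ∈ A_X: ‖e^{t G_X}(A) − ρ_{G,X}(A)·1‖ ≤ 2^{|X|} (M+1)^{|X|} e^{−g t} ‖A‖. -/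
noncomputable section
set_option maxHeartbeats 1000000
set_option synthInstance.maxHeartbeats 400000
open scoped BigOperators ComplexOrder
open Classical

namespace QMS

/-- Classical configurations over a finite volume: one `Fin m` label per site. -/
abbrev Conf (d m : ℕ) (Λ : Finset (Site d)) : Type := ↥Λ → Fin m

/-- The Hilbert space `⊗_{x∈Λ} ℂ^m`, realized as `ℓ²` of configurations. -/
abbrev Hs (d m : ℕ) (Λ : Finset (Site d)) : Type := EuclideanSpace ℂ (Conf d m Λ)

/-- The observable algebra `A_Λ = B(H_Λ)` with the operator norm. -/
abbrev Alg (d m : ℕ) (Λ : Finset (Site d)) : Type := Hs d m Λ →L[ℂ] Hs d m Λ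

/-- Super-operators on `A_Λ`, with the induced operator norm. -/
abbrev Super (d m : ℕ) (Λ : Finset (Site d)) : Type := Alg d m Λ →L[ℂ] Alg d m Λ

/-- The exponential of a continuous linear endomorphism, defined by its power series. -/
def expCLM {E : Type*} [NormedAddCommGroup E] [NormedSpace ℂ E] (T : E →L[ℂ] E) : E →L[ℂ] E :=
  ∑' n : ℕ, ((n.factorial : ℂ))⁻¹ • T ^ n

variable (d m : ℕ)

/-- Matrix entries of an observable in the configuration basis. -/
def toMat {Λ : Finset (Site d)} :
    Alg d m Λ ≃ₗ[ℂ] Matrix (Conf d m Λ) (Conf d m Λ) ℂ :=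
  ((Matrix.toEuclideanLin).trans LinearMap.toContinuousLinearMap).symm

/-- Restriction of a configuration on `Λ` to a subset `S ⊆ Λ`. -/
def restrictConf {S Λ : Finset (Site d)} (hS : S ⊆ Λ) (f : Conf d m Λ) : Conf d m S :=
  fun x => f ⟨x.1, hS x.2⟩

/-- Replace the `S`-part of a configuration on `Λ` by `g`. -/
def combineConf {S Λ : Finset (Site d)} (g : Conf d m S) (f : Conf d m Λ) : Conf d m Λ :=
  fun x => if h : (x : Site d) ∈ S then g ⟨x.1, h⟩ else f x

/-- The canonical embedding `A_S ∋ A ↦ A ⊗ 1 ∈ A_Λ` for `S ⊆ Λ`. -/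
def embedObs {S Λ : Finset (Site d)} (hS : S ⊆ Λ) (A : Alg d m S) : Alg d m Λ :=
  (toMat d m).symm (Matrix.of fun f f' =>
    if ∀ x : ↥Λ, (x : Site d) ∉ S → f x = f' x then
      toMat d m A (restrictConf d m hS f) (restrictConf d m hS f') else 0)

/-- Matrix units of `A_Λ` in the configuration basis. -/
def matUnit {Λ : Finset (Site d)} (g g' : Conf d m Λ) : Alg d m Λ :=
  (toMat d m).symm (Matrix.single g g' 1)

/-- The matrix-level form of the embedding `B(A_S) ∋ O ↦ O ⊗ id ∈ B(A_Λ)`. -/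
def embedSuperMat {S Λ : Finset (Site d)} (hS : S ⊆ Λ) (O : Super d m S) :
    Matrix (Conf d m Λ) (Conf d m Λ) ℂ →ₗ[ℂ] Matrix (Conf d m Λ) (Conf d m Λ) ℂ where
  toFun B := Matrix.of fun f f' =>
    ∑ g : Conf d m S, ∑ g' : Conf d m S,
      toMat d m (O (matUnit d m g g')) (restrictConf d m hS f) (restrictConf d m hS f') *
        B (combineConf d m g f) (combineConf d m g' f')
  map_add' B B' := by
    ext f f'
    simp only [Matrix.of_apply, Matrix.add_apply, mul_add, Finset.sum_add_distrib]
  map_smul' a B := by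
    ext f f'
    simp only [Matrix.of_apply, Matrix.smul_apply, smul_eq_mul, RingHom.id_apply]
    rw [Finset.mul_sum]
    refine Finset.sum_congr rfl fun g _ => ?_
    rw [Finset.mul_sum]
    refine Finset.sum_congr rfl fun g' _ => ?_
    ring

/-- The canonical embedding `B(A_S) ∋ O ↦ O ⊗ id ∈ B(A_Λ)` of super-operators, `S ⊆ Λ`. -/
def embedSuper {S Λ : Finset (Site d)} (hS : S ⊆ Λ) (O : Super d m S) : Super d m Λ :=
  LinearMap.toContinuousLinearMap
    ((toMat d m).symm.toLinearMap ∘ₗ embedSuperMat d m hS O ∘ₗ (toMat d m).toLinearMap)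

/-- Embedding of the interaction term `V(Γ)` into a volume `Λ` (zero unless `Γ ⊆ Λ`). -/
def VembOn (V : ∀ Γ : Finset (Site d), Super d m Γ) (Λ Γ : Finset (Site d)) : Super d m Λ :=
  if h : Γ ⊆ Λ then embedSuper d m h (V Γ) else 0

/-- The free generator `G_Λ := Σ_{x∈Λ} G(x)` acting on `A_Λ`. -/
def Gsum (G : ∀ x : Site d, Super d m {x}) (Λ : Finset (Site d)) : Super d m Λ :=
  ∑ x ∈ Λ.attach, embedSuper d m (Finset.singleton_subset_iff.mpr x.2) (G x.1)

/-- The interacting part `V_Λ := Σ_{Γ⊆Λ} V(Γ)` acting on `A_Λ`. -/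
def Vsum (V : ∀ Γ : Finset (Site d), Super d m Γ) (Λ : Finset (Site d)) : Super d m Λ :=
  ∑ Γ ∈ Λ.powerset.attach, embedSuper d m (Finset.mem_powerset.mp Γ.2) (V Γ.1)

/-- The full generator `L_Λ := G_Λ + V_Λ`. -/
def Ldyn (G : ∀ x : Site d, Super d m {x}) (V : ∀ Γ : Finset (Site d), Super d m Γ)
    (Λ : Finset (Site d)) : Super d m Λ :=
  Gsum d m G Λ + Vsum d m V Λ

/-- The projection `P_Λ(E) = ∏_{x∈E}(id−Q_x) ∘ ∏_{x∈Λ∖E} Q_x` (all factors commute). -/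
def Pproj (Q : ∀ x : Site d, Super d m {x}) (Λ E : Finset (Site d)) : Super d m Λ :=
  (Λ.attach.toList.map fun x : ↥Λ =>
    if (x : Site d) ∈ E then
      (1 : Super d m Λ) - embedSuper d m (Finset.singleton_subset_iff.mpr x.2) (Q x.1)
    else embedSuper d m (Finset.singleton_subset_iff.mpr x.2) (Q x.1)).prod

/-- `ℓ¹` (= nearest-neighbour graph) distance between two sites of `ℤ^d`. -/
def siteDist {d : ℕ} (x y : Site d) : ℕ := ∑ i, (x i - y i).natAbs

/-- Distance between two sets of sites. -/
def setDist {d : ℕ} (X Y : Set (Site d)) : ℕ :=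
  sInf {n : ℕ | ∃ x ∈ X, ∃ y ∈ Y, siteDist x y = n}

/-- The nearest-neighbour graph of `ℤ^d`. -/
def latticeGraph (d : ℕ) : SimpleGraph (Site d) where
  Adj x y := siteDist x y = 1
  symm := by
    constructor
    intro x y h
    have e : ∀ i, (y i - x i).natAbs = (x i - y i).natAbs := fun i => by
      rw [← Int.natAbs_neg, neg_sub]
    simp only [siteDist] at h ⊢
    simpa only [e] using h
  loopless := by
    constructor
    intro x h
    simp [siteDist, sub_self] at h

/-- Connectedness of a finite set of sites in the nearest-neighbour graph of `ℤ^d`. -/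
def IsConnectedFinset {d : ℕ} (Γ : Finset (Site d)) : Prop :=
  ((latticeGraph d).induce (Γ : Set (Site d))).Preconnected

/-- The completely bounded norm of a super-operator supported in `S`:
the supremum of the norms of its embeddings into larger volumes. -/
def cbNorm {S : Finset (Site d)} (O : Super d m S) : ℝ :=
  ⨆ Λ : {Λ : Finset (Site d) // S ⊆ Λ}, ‖embedSuper d m Λ.2 O‖

/-- The interaction norm `|||V|||_l`. -/
def intNorm (V : ∀ Γ : Finset (Site d), Super d m Γ) (l : ℝ) : ℝ :=
  ⨆ x : Site d, ∑' Γ : {Γ : Finset (Site d) // x ∈ Γ},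
    Real.exp ((Γ.1.card : ℝ) / l) * cbNorm d m (V Γ.1)

/-- A state on `A_Λ`: a normalized positive linear functional. -/
def IsState {Λ : Finset (Site d)} (ρ : Alg d m Λ →ₗ[ℂ] ℂ) : Prop :=
  ρ 1 = 1 ∧ ∀ A : Alg d m Λ, A.IsPositive → 0 ≤ ρ A

/-- A positive map on `A_Λ` maps positive semidefinite elements to positive semidefinite ones. -/
def IsPositiveMap {Λ : Finset (Site d)} (T : Super d m Λ) : Prop :=
  ∀ A : Alg d m Λ, A.IsPositive → (T A).IsPositive

/-- The iterated time-ordered chain of the Dyson expansion: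
`chainOp k u = ∫_{0≤t₁≤⋯≤t_k≤u} e^{(u−t_k)G}P(E_k)V(Γ_{k-1}) ⋯ V(Γ_0)e^{t₁G}P(E_0) dt`. -/
def chainOp {Λ : Finset (Site d)} (GΛ : Super d m Λ) (PE VΓ : ℕ → Super d m Λ) :
    ℕ → ℝ → Super d m Λ
  | 0, u => expCLM (u • GΛ) ∘L PE 0
  | (k + 1), u => ∫ r in (0:ℝ)..u,
      (expCLM ((u - r) • GΛ) ∘L PE (k + 1) ∘L VΓ k) ∘L chainOp GΛ PE VΓ k r

/-- The expansion term `H_t(s, Γ, E, ·)` of the paper (with `0`-based indexing: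
`Γ 0, …, Γ (n-1)` are the paper's `Γ_1, …, Γ_n` and `E 0, …, E n` the paper's
`E_1, …, E_{n+1}`), as a super-operator on `A_Λ`. -/
def Hterm (G Q : ∀ x : Site d, Super d m {x}) (V : ∀ Γ : Finset (Site d), Super d m Γ)
    (Λ : Finset (Site d)) (n : ℕ) (Γ E : ℕ → Finset (Site d)) (t s : ℝ) : Super d m Λ :=
  (expCLM ((t - s) • Gsum d m G Λ) ∘L Pproj d m Q Λ (E n) ∘L
      VembOn d m V Λ (Γ (n - 1))) ∘L
    chainOp d m (Gsum d m G Λ) (fun i => Pproj d m Q Λ (E i)) (fun i => VembOn d m V Λ (Γ i))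
      (n - 1) s

-- auxiliary lemmas, to be inserted before the theorem
section Aux

variable (d m : ℕ)

lemma restrictConf_combineConf_self {S Λ : Finset (Site d)} (hS : S ⊆ Λ)
    (g : Conf d m S) (f : Conf d m Λ) :
    restrictConf d m hS (combineConf d m g f) = g := by
  funext x
  simp [restrictConf, combineConf, x.2]

lemma restrictConf_combineConf_disj {S T Λ : Finset (Site d)} (hT : T ⊆ Λ)
    (hdis : ∀ a ∈ T, a ∉ S) (g : Conf d m S) (f : Conf d m Λ) :
    restrictConf d m hT (combineConf d m g f) = restrictConf d m hT f := by
  funext x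
  simp [restrictConf, combineConf, hdis x.1 x.2]

lemma combineConf_combineConf_self {S Λ : Finset (Site d)} (g h : Conf d m S) (f : Conf d m Λ) :
    combineConf d m g (combineConf d m h f) = combineConf d m g f := by
  funext x
  by_cases hx : (x : Site d) ∈ S <;> simp [combineConf, hx]

lemma combineConf_comm_disj {S T Λ : Finset (Site d)} (hdis : ∀ a ∈ S, a ∉ T)
    (g : Conf d m S) (h : Conf d m T) (f : Conf d m Λ) :
    combineConf d m h (combineConf d m g f) = combineConf d m g (combineConf d m h f) := by
  funext x
  by_cases hx : (x : Site d) ∈ S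
  · simp [combineConf, hx, hdis _ hx]
  · by_cases hx' : (x : Site d) ∈ T <;> simp [combineConf, hx, hx']

lemma toMat_matUnit {Λ : Finset (Site d)} (g g' : Conf d m Λ) :
    toMat d m (matUnit d m g g') = Matrix.single g g' 1 := by
  simp [matUnit]

lemma alg_decomp {Λ : Finset (Site d)} (A : Alg d m Λ) :
    A = ∑ g : Conf d m Λ, ∑ g' : Conf d m Λ, toMat d m A g g' • matUnit d m g g' := by
  apply (toMat d m).injective
  simp only [map_sum, map_smul, toMat_matUnit, Matrix.smul_single, smul_eq_mul, mul_one]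
  exact Matrix.matrix_eq_sum_single (toMat d m A)

lemma toMat_super_apply {Λ : Finset (Site d)} (O : Super d m Λ) (A : Alg d m Λ)
    (p q : Conf d m Λ) :
    toMat d m (O A) p q
      = ∑ g : Conf d m Λ, ∑ g' : Conf d m Λ,
          toMat d m A g g' * toMat d m (O (matUnit d m g g')) p q := by
  conv_lhs => rw [alg_decomp d m A]
  simp [map_sum, map_smul, Matrix.sum_apply, smul_eq_mul]

lemma embedSuper_apply {S Λ : Finset (Site d)} (hS : S ⊆ Λ) (O : Super d m S) (B : Alg d m Λ) :
    embedSuper d m hS O B = (toMat d m).symm (embedSuperMat d m hS O (toMat d m B)) := by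
  simp [embedSuper]

lemma toMat_embedSuper_apply {S Λ : Finset (Site d)} (hS : S ⊆ Λ) (O : Super d m S)
    (B : Alg d m Λ) :
    toMat d m (embedSuper d m hS O B) = embedSuperMat d m hS O (toMat d m B) := by
  rw [embedSuper_apply, LinearEquiv.apply_symm_apply]

lemma sum4_comm {α β : Type*} [Fintype α] [Fintype β] (F : α → α → β → β → ℂ) :
    ∑ g, ∑ g', ∑ h, ∑ h', F g g' h h' = ∑ h, ∑ h', ∑ g, ∑ g', F g g' h h' :=
  calc ∑ g, ∑ g', ∑ h, ∑ h', F g g' h h'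
      = ∑ g, ∑ h, ∑ g', ∑ h', F g g' h h' :=
        Finset.sum_congr rfl fun g _ => Finset.sum_comm
    _ = ∑ h, ∑ g, ∑ g', ∑ h', F g g' h h' := Finset.sum_comm
    _ = ∑ h, ∑ g, ∑ h', ∑ g', F g g' h h' :=
        Finset.sum_congr rfl fun h _ => Finset.sum_congr rfl fun g _ => Finset.sum_comm
    _ = ∑ h, ∑ h', ∑ g, ∑ g', F g g' h h' :=
        Finset.sum_congr rfl fun h _ => Finset.sum_comm

lemma embedSuperMat_comp {S Λ : Finset (Site d)} (hS : S ⊆ Λ) (O O' : Super d m S)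
    (C : Matrix (Conf d m Λ) (Conf d m Λ) ℂ) :
    embedSuperMat d m hS O (embedSuperMat d m hS O' C) = embedSuperMat d m hS (O ∘L O') C := by
  ext f f'
  have expand : ∀ h h' : Conf d m S,
      toMat d m ((O ∘L O') (matUnit d m h h')) (restrictConf d m hS f) (restrictConf d m hS f')
        = ∑ g : Conf d m S, ∑ g' : Conf d m S,
            toMat d m (O' (matUnit d m h h')) g g' *
              toMat d m (O (matUnit d m g g')) (restrictConf d m hS f)
                (restrictConf d m hS f') := by
    intro h h'
    rw [ContinuousLinearMap.comp_apply]
    exact toMat_super_apply d m O _ _ _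
  simp only [embedSuperMat, LinearMap.coe_mk, AddHom.coe_mk, Matrix.of_apply,
    restrictConf_combineConf_self, combineConf_combineConf_self, expand]
  simp_rw [Finset.mul_sum, Finset.sum_mul]
  rw [sum4_comm]
  exact Finset.sum_congr rfl fun h _ => Finset.sum_congr rfl fun h' _ =>
    Finset.sum_congr rfl fun g _ => Finset.sum_congr rfl fun g' _ => by ring

lemma embedSuper_mul {S Λ : Finset (Site d)} (hS : S ⊆ Λ) (O O' : Super d m S) :
    embedSuper d m hS O * embedSuper d m hS O' = embedSuper d m hS (O ∘L O') := by
  refine ContinuousLinearMap.ext fun B => ?_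
  rw [ContinuousLinearMap.mul_apply]
  apply (toMat d m).injective
  rw [toMat_embedSuper_apply, toMat_embedSuper_apply, toMat_embedSuper_apply,
    embedSuperMat_comp]

lemma embedSuperMat_comm_disj {S T Λ : Finset (Site d)} (hS : S ⊆ Λ) (hT : T ⊆ Λ)
    (hdis : ∀ a ∈ S, a ∉ T) (O : Super d m S) (O' : Super d m T)
    (C : Matrix (Conf d m Λ) (Conf d m Λ) ℂ) :
    embedSuperMat d m hS O (embedSuperMat d m hT O' C)
      = embedSuperMat d m hT O' (embedSuperMat d m hS O C) := by
  have hdis' : ∀ a ∈ T, a ∉ S := fun a haT haS => hdis a haS haT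
  ext f f'
  simp only [embedSuperMat, LinearMap.coe_mk, AddHom.coe_mk, Matrix.of_apply,
    restrictConf_combineConf_disj d m hT hdis', restrictConf_combineConf_disj d m hS hdis,
    combineConf_comm_disj d m hdis]
  simp_rw [Finset.mul_sum]
  rw [sum4_comm]
  exact Finset.sum_congr rfl fun h _ => Finset.sum_congr rfl fun h' _ =>
    Finset.sum_congr rfl fun g _ => Finset.sum_congr rfl fun g' _ => by ring

lemma embedSuper_comm_disj {S T Λ : Finset (Site d)} (hS : S ⊆ Λ) (hT : T ⊆ Λ)
    (hdis : ∀ a ∈ S, a ∉ T) (O : Super d m S) (O' : Super d m T) :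
    Commute (embedSuper d m hS O) (embedSuper d m hT O') := by
  refine ContinuousLinearMap.ext fun B => ?_
  rw [ContinuousLinearMap.mul_apply, ContinuousLinearMap.mul_apply]
  apply (toMat d m).injective
  rw [toMat_embedSuper_apply, toMat_embedSuper_apply, toMat_embedSuper_apply,
    toMat_embedSuper_apply, embedSuperMat_comm_disj d m hS hT hdis]

end Aux
section AbstractCLM

variable {E : Type*} [NormedAddCommGroup E] [NormedSpace ℂ E]

lemma expCLM_eq [CompleteSpace E] (T : E →L[ℂ] E) : expCLM T = NormedSpace.exp T := by
  rw [NormedSpace.exp_eq_tsum ℂ]; rfl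

lemma expCLM_add_of_commute [CompleteSpace E] {a b : E →L[ℂ] E} (h : Commute a b) :
    expCLM (a + b) = expCLM a * expCLM b := by
  rw [expCLM_eq, expCLM_eq, expCLM_eq]
  exact NormedSpace.exp_add_of_commute_of_mem_ball (𝕂 := ℂ) h
    ((NormedSpace.expSeries_radius_eq_top ℂ (E →L[ℂ] E)).symm ▸ edist_lt_top _ _)
    ((NormedSpace.expSeries_radius_eq_top ℂ (E →L[ℂ] E)).symm ▸ edist_lt_top _ _)

lemma expCLM_list_sum [CompleteSpace E] :
    ∀ l : List (E →L[ℂ] E), l.Pairwise Commute → expCLM l.sum = (l.map expCLM).prod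
  | [], _ => by
    simp only [List.sum_nil, List.map_nil, List.prod_nil, expCLM_eq, NormedSpace.exp_zero]
  | a :: l, h => by
    have h' := List.pairwise_cons.mp h
    rw [List.sum_cons, List.map_cons, List.prod_cons,
      expCLM_add_of_commute (Commute.list_sum_right a l h'.1), expCLM_list_sum l h'.2]

lemma expCLM_mul_eq_self_of_mul_eq_zero [CompleteSpace E] (a b : E →L[ℂ] E)
    (hab : a * b = 0) : expCLM a * b = b := by
  rw [expCLM_eq]
  have hs := NormedSpace.exp_series_hasSum_exp' (𝕂 := ℂ) a
  have h2 := hs.mul_right b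
  have h3 : HasSum (fun n : ℕ => ((n.factorial : ℂ))⁻¹ • a ^ n * b) b := by
    have hz : ∀ n : ℕ, n ≠ 0 → ((n.factorial : ℂ))⁻¹ • a ^ n * b = 0 := by
      intro n hn
      obtain ⟨k, rfl⟩ := Nat.exists_eq_succ_of_ne_zero hn
      rw [smul_mul_assoc, pow_succ, mul_assoc, hab, mul_zero, smul_zero]
    have h0 := hasSum_single (f := fun n : ℕ => ((n.factorial : ℂ))⁻¹ • a ^ n * b) 0
      fun n hn => hz n hn
    simpa using h0
  exact h2.unique h3

lemma expCLM_smul_finset_sum [CompleteSpace E] {ι : Type*} (s : Finset ι) (t : ℝ)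
    (f : ι → E →L[ℂ] E) (hcomm : ∀ i ∈ s, ∀ j ∈ s, i ≠ j → Commute (f i) (f j)) :
    expCLM (t • ∑ i ∈ s, f i) = (s.toList.map fun i => expCLM (t • f i)).prod := by
  rw [Finset.smul_sum, ← Finset.sum_map_toList, expCLM_list_sum _ ?_, List.map_map]
  · rfl
  · rw [List.pairwise_map]
    refine s.nodup_toList.imp_of_mem ?_
    intro a b ha hb hab
    exact ((hcomm a (Finset.mem_toList.mp ha) b (Finset.mem_toList.mp hb) hab).smul_left
      t).smul_right t

lemma expCLM_relax [CompleteSpace E] (t : ℝ) (a q : E →L[ℂ] E) (h : a * q = 0) :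
    expCLM (t • a) - q = expCLM (t • a) * (1 - q) := by
  rw [mul_sub, mul_one, expCLM_mul_eq_self_of_mul_eq_zero (t • a) q
    (by rw [smul_mul_assoc, h, smul_zero])]

lemma clm_list_prod_norm_le_one :
    ∀ l : List (E →L[ℂ] E), (∀ a ∈ l, ‖a‖ ≤ 1) → ‖l.prod‖ ≤ 1
  | [], _ => by
    rw [List.prod_nil, ContinuousLinearMap.one_def]
    exact ContinuousLinearMap.norm_id_le
  | a :: l, h => by
    rw [List.prod_cons]
    calc ‖a * l.prod‖ ≤ ‖a‖ * ‖l.prod‖ := norm_mul_le _ _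
      _ ≤ 1 * 1 := mul_le_mul (h a List.mem_cons_self)
          (clm_list_prod_norm_le_one l fun b hb => h b (List.mem_cons_of_mem a hb))
          (norm_nonneg _) zero_le_one
      _ = 1 := one_mul 1

lemma clm_prod_sub_prod_bound (M δ : ℝ) (hM : 0 ≤ M) (hδ0 : 0 ≤ δ) (hδ1 : δ ≤ 1) :
    ∀ l : List ((E →L[ℂ] E) × (E →L[ℂ] E)),
      (∀ p ∈ l, ‖p.1‖ ≤ 1) → (∀ p ∈ l, ‖p.2‖ ≤ M * δ) →
      ‖(l.map fun p => p.1 + p.2).prod - (l.map Prod.fst).prod‖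
        ≤ ((1 + M) ^ l.length - 1) * δ
  | [], _, _ => by simp
  | p :: l, hQ, hR => by
    have ih := clm_prod_sub_prod_bound M δ hM hδ0 hδ1 l
      (fun q hq => hQ q (List.mem_cons_of_mem p hq))
      (fun q hq => hR q (List.mem_cons_of_mem p hq))
    have hPQ : ‖(l.map Prod.fst).prod‖ ≤ 1 := by
      refine clm_list_prod_norm_le_one _ fun a ha => ?_
      obtain ⟨q, hq, rfl⟩ := List.mem_map.mp ha
      exact hQ q (List.mem_cons_of_mem p hq)
    have hp1 : ‖p.1‖ ≤ 1 := hQ p List.mem_cons_self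
    have hp2 : ‖p.2‖ ≤ M * δ := hR p List.mem_cons_self
    have h12 : ‖p.1 + p.2‖ ≤ 1 + M := by
      refine le_trans (norm_add_le _ _) ?_
      nlinarith
    have key : (p.1 + p.2) * ((l.map fun p => p.1 + p.2).prod - (l.map Prod.fst).prod)
        + p.2 * (l.map Prod.fst).prod
        = (p.1 + p.2) * (l.map fun p => p.1 + p.2).prod - p.1 * (l.map Prod.fst).prod := by
      simp only [mul_sub, add_mul]
      abel
    simp only [List.map_cons, List.prod_cons, List.length_cons]
    rw [← key]
    calc ‖_ + _‖
        ≤ ‖(p.1 + p.2) * ((l.map fun p => p.1 + p.2).prod - (l.map Prod.fst).prod)‖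
          + ‖p.2 * (l.map Prod.fst).prod‖ := norm_add_le _ _
      _ ≤ ‖p.1 + p.2‖ * ‖(l.map fun p => p.1 + p.2).prod - (l.map Prod.fst).prod‖
          + ‖p.2‖ * ‖(l.map Prod.fst).prod‖ := add_le_add (norm_mul_le _ _) (norm_mul_le _ _)
      _ ≤ (1 + M) * (((1 + M) ^ l.length - 1) * δ) + (M * δ) * 1 := by
          refine add_le_add (mul_le_mul h12 ih (norm_nonneg _) (by linarith))
            (mul_le_mul hp2 hPQ (norm_nonneg _) (by nlinarith))
      _ = ((1 + M) ^ (l.length + 1) - 1) * δ := by rw [pow_succ]; ring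

end AbstractCLM

/-- Exponential relaxation of the non-interacting product dynamics. -/
theorem product_dynamics_relaxation
    (d m : ℕ) (hd : 1 ≤ d) (hm : 1 ≤ m)
    (G Q : ∀ x : Site d, Super d m {x})
    (V : ∀ Γ : Finset (Site d), Super d m Γ)
    (M g : ℝ) (hM : 0 < M) (hg : 0 < g)
    (hQproj : ∀ x : Site d, Q x ∘L Q x = Q x)
    (hQrange : ∀ (x : Site d) (A : Alg d m {x}), ∃ c : ℂ, Q x A = c • (1 : Alg d m {x}))
    (hQone : ∀ x : Site d, Q x (1 : Alg d m {x}) = 1)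
    (hQG : ∀ x : Site d, Q x ∘L G x = 0) (hGQ : ∀ x : Site d, G x ∘L Q x = 0)
    (hdecay : ∀ (x : Site d) (Λ : Finset (Site d)) (hx : ({x} : Finset (Site d)) ⊆ Λ) (t : ℝ),
      0 ≤ t →
      ‖expCLM (t • embedSuper d m hx (G x)) ∘L (1 - embedSuper d m hx (Q x))‖ ≤
        M * Real.exp (-g * t))
    (hQcb : ∀ (x : Site d) (Λ : Finset (Site d)) (hx : ({x} : Finset (Site d)) ⊆ Λ),
      ‖embedSuper d m hx (Q x)‖ ≤ 1)
    (hVone : ∀ Γ : Finset (Site d), V Γ (1 : Alg d m Γ) = 0)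
    (hVconn : ∀ Γ : Finset (Site d), ¬(Γ.Nonempty ∧ IsConnectedFinset Γ) → V Γ = 0)
    (hVcb : ∀ Γ : Finset (Site d), BddAbove (Set.range fun Λ : {Λ : Finset (Site d) // Γ ⊆ Λ} =>
      ‖embedSuper d m Λ.2 (V Γ)‖))
    (ρx : ∀ x : Site d, Alg d m {x} →ₗ[ℂ] ℂ)
    (hρx : ∀ (x : Site d) (B : Alg d m {x}), Q x B = ρx x B • (1 : Alg d m {x}))
    (X : Finset (Site d)) (hX : X.Nonempty)
    (ρGX : Alg d m X →ₗ[ℂ] ℂ)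
    (hρGX : ∀ A : Alg d m X,
      (X.attach.toList.map fun x : ↥X =>
        embedSuper d m (Finset.singleton_subset_iff.mpr x.2) (Q x.1)).prod A =
      ρGX A • (1 : Alg d m X)) :
    ∀ t : ℝ, 0 ≤ t → ∀ A : Alg d m X,
      ‖expCLM (t • Gsum d m G X) A - ρGX A • (1 : Alg d m X)‖ ≤
        2 ^ X.card * (M + 1) ^ X.card * Real.exp (-g * t) * ‖A‖ := by
  intro t ht A
  set δ : ℝ := Real.exp (-g * t) with hδdef
  have hδ0 : (0 : ℝ) ≤ δ := (Real.exp_pos _).le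
  have hδ1 : δ ≤ 1 := by
    rw [hδdef, ← Real.exp_zero]
    exact Real.exp_le_exp.mpr (by nlinarith)
  -- abbreviations
  let Gt : ↥X → Super d m X :=
    fun x => embedSuper d m (Finset.singleton_subset_iff.mpr x.2) (G x.1)
  let Qt : ↥X → Super d m X :=
    fun x => embedSuper d m (Finset.singleton_subset_iff.mpr x.2) (Q x.1)
  let E : ↥X → Super d m X := fun x => expCLM (t • Gt x)
  -- the embedded G kills the embedded Q
  have hGQ0 : ∀ x : ↥X, Gt x * Qt x = 0 := by
    intro x
    show embedSuper d m _ (G x.1) * embedSuper d m _ (Q x.1) = 0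
    rw [embedSuper_mul, hGQ x.1]
    refine ContinuousLinearMap.ext fun B => ?_
    apply (toMat d m).injective
    rw [toMat_embedSuper_apply]
    ext f f'
    simp [embedSuperMat]
  have hE_sub : ∀ x : ↥X, E x - Qt x = E x * (1 - Qt x) := fun x =>
    expCLM_relax t (Gt x) (Qt x) (hGQ0 x)
  have hRle : ∀ x : ↥X, ‖E x - Qt x‖ ≤ M * δ := by
    intro x
    rw [hE_sub x]
    have h := hdecay x.1 X (Finset.singleton_subset_iff.mpr x.2) t ht
    calc ‖E x * (1 - Qt x)‖
        = ‖expCLM (t • Gt x) ∘L (1 - Qt x)‖ := by rw [ContinuousLinearMap.mul_def]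
      _ ≤ M * δ := h
  have hQle : ∀ x : ↥X, ‖Qt x‖ ≤ 1 := fun x =>
    hQcb x.1 X (Finset.singleton_subset_iff.mpr x.2)
  -- commutation of the embedded generators
  have hcomm : ∀ x y : ↥X, x ≠ y → Commute (Gt x) (Gt y) := by
    intro x y hxy
    have hdis : ∀ a ∈ ({x.1} : Finset (Site d)), a ∉ ({y.1} : Finset (Site d)) := by
      intro a ha hb
      simp only [Finset.mem_singleton] at ha hb
      exact hxy (Subtype.ext (by rw [← ha, hb]))
    exact embedSuper_comm_disj d m (Finset.singleton_subset_iff.mpr x.2)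
      (Finset.singleton_subset_iff.mpr y.2) hdis (G x.1) (G y.1)
  -- exponential of the free generator as a product
  have key1 : expCLM (t • Gsum d m G X) = (X.attach.toList.map E).prod :=
    expCLM_smul_finset_sum (E := Alg d m X) X.attach t Gt
      (fun i _ j _ hij => hcomm i j hij)
  -- the pair list
  let l : List (Super d m X × Super d m X) :=
    X.attach.toList.map fun x => (Qt x, E x - Qt x)
  have hl1 : l.map Prod.fst = X.attach.toList.map Qt := by
    rw [List.map_map]; rfl
  have hl2 : (l.map fun p => p.1 + p.2) = X.attach.toList.map E := by
    rw [List.map_map]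
    refine List.map_congr_left fun x _ => ?_
    show Qt x + (E x - Qt x) = E x
    abel
  have hlen : l.length = X.card := by
    simp [l, Finset.length_toList]
  have hmain := clm_prod_sub_prod_bound M δ hM.le hδ0 hδ1 l
    (by intro p hp; obtain ⟨x, hx', rfl⟩ := List.mem_map.mp hp; exact hQle x)
    (by intro p hp; obtain ⟨x, hx', rfl⟩ := List.mem_map.mp hp; exact hRle x)
  rw [hl1, hl2, hlen] at hmain
  -- assemble
  have happ : expCLM (t • Gsum d m G X) A - ρGX A • (1 : Alg d m X)
      = ((X.attach.toList.map E).prod - (X.attach.toList.map Qt).prod) A := by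
    rw [ContinuousLinearMap.sub_apply, key1, ← hρGX A]
  rw [happ]
  have hfinal := ContinuousLinearMap.le_opNorm
    ((X.attach.toList.map E).prod - (X.attach.toList.map Qt).prod) A
  have h2 : ((1 + M) ^ X.card - 1 : ℝ) ≤ 2 ^ X.card * (M + 1) ^ X.card := by
    have hp : (0 : ℝ) ≤ (1 + M) ^ X.card := by positivity
    have h21 : ((1 : ℝ) + M) ^ X.card ≤ 2 ^ X.card * (1 + M) ^ X.card :=
      calc ((1 : ℝ) + M) ^ X.card = 1 * ((1 + M) ^ X.card) := (one_mul _).symm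
        _ ≤ 2 ^ X.card * (1 + M) ^ X.card :=
            mul_le_mul_of_nonneg_right (one_le_pow₀ (by norm_num)) hp
    have he : ((1 : ℝ) + M) ^ X.card = (M + 1) ^ X.card := by ring
    rw [he] at h21
    linarith
  calc ‖((X.attach.toList.map E).prod - (X.attach.toList.map Qt).prod) A‖
      ≤ ‖(X.attach.toList.map E).prod - (X.attach.toList.map Qt).prod‖ * ‖A‖ := hfinal
    _ ≤ (((1 + M) ^ X.card - 1) * δ) * ‖A‖ :=
        mul_le_mul_of_nonneg_right hmain (norm_nonneg _)
    _ ≤ 2 ^ X.card * (M + 1) ^ X.card * δ * ‖A‖ := by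
        refine mul_le_mul_of_nonneg_right ?_ (norm_nonneg _)
        exact mul_le_mul_of_nonneg_right h2 hδ0

end QMS
end
end

section
/- Single-step sum bound (inner estimate in the proof of Lemma 2): let w be a function from the finite subsets of ℤ^d to [0,∞) with w(∅) = 0, let l'' > 0 and c > 0, set 1/l := log 2 + 1/l'', and suppose s := sup_{x∈ℤ^d} Σ_{Γ∋x} e^{|Γ|/l} w(Γ) < ∞. Then for every nonempty finite E ⊂ ℤ^d the double sum Σ_{Γ finite, Γ∩E≠∅} Σ_{E' finite, E'∖Γ = E∖Γ} e^{|Γ|/l''} w(Γ) / (c·|E|) — the outer sum over all finite subsets Γ of ℤ^d meeting E and the inner sum over all finite subsets E' of ℤ^d with E'∖Γ = E∖Γ — is summable and bounded above by s/c. -/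
noncomputable section
set_option maxHeartbeats 1000000

namespace QMS

/-- For fixed `Γ`, the finite subsets `E'` with `E' \ Γ = E \ Γ` correspond to subsets of `Γ`. -/
def fiberEquiv {d : ℕ} (E Γ : Finset (Site d)) :
    {E' : Finset (Site d) // E' \ Γ = E \ Γ} ≃ {S : Finset (Site d) // S ∈ Γ.powerset} where
  toFun E' := ⟨E'.1 ∩ Γ, Finset.mem_powerset.2 Finset.inter_subset_right⟩
  invFun S := ⟨(E \ Γ) ∪ S.1, by
    have hS := Finset.mem_powerset.1 S.2
    rw [Finset.union_sdiff_distrib, Finset.sdiff_idem,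
      Finset.sdiff_eq_empty_iff_subset.2 hS, Finset.union_empty]⟩
  left_inv := fun E' => by
    ext1
    dsimp
    conv_rhs => rw [← Finset.sdiff_union_inter E'.1 Γ]
    rw [E'.2]
  right_inv := fun S => by
    ext1
    dsimp
    have hS := Finset.mem_powerset.1 S.2
    rw [Finset.union_inter_distrib_right, Finset.sdiff_inter_self, Finset.empty_union,
      Finset.inter_eq_left.2 hS]

instance fiberFintype {d : ℕ} (E Γ : Finset (Site d)) :
    Fintype {E' : Finset (Site d) // E' \ Γ = E \ Γ} :=
  Fintype.ofEquiv _ (fiberEquiv E Γ).symm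

theorem fiber_card {d : ℕ} (E Γ : Finset (Site d)) :
    Fintype.card {E' : Finset (Site d) // E' \ Γ = E \ Γ} = 2 ^ Γ.card := by
  rw [Fintype.card_congr (fiberEquiv E Γ), Fintype.card_coe, Finset.card_powerset]

/-- The pairs in the statement form a sigma type over `Γ`. -/
def pairEquiv {d : ℕ} (E : Finset (Site d)) :
    {p : Finset (Site d) × Finset (Site d) // (p.1 ∩ E).Nonempty ∧ p.2 \ p.1 = E \ p.1} ≃
    Σ Γ : {Γ : Finset (Site d) // (Γ ∩ E).Nonempty},
      {E' : Finset (Site d) // E' \ Γ.1 = E \ Γ.1} where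
  toFun p := ⟨⟨p.1.1, p.2.1⟩, ⟨p.1.2, p.2.2⟩⟩
  invFun q := ⟨(q.1.1, q.2.1), ⟨q.1.2, q.2.2⟩⟩
  left_inv _ := rfl
  right_inv _ := rfl

/-- Step 1: summing over `Γ` meeting `E` is bounded by `|E| * s`. -/
theorem step1 {d : ℕ} (E : Finset (Site d)) (f : Finset (Site d) → ℝ)
    (hf0 : ∀ Γ, 0 ≤ f Γ) (s : ℝ)
    (hsum : ∀ x : Site d, Summable fun Γ : {Γ : Finset (Site d) // x ∈ Γ} => f Γ.1)
    (hb : ∀ x : Site d, (∑' Γ : {Γ : Finset (Site d) // x ∈ Γ}, f Γ.1) ≤ s) :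
    Summable (fun Γ : {Γ : Finset (Site d) // (Γ ∩ E).Nonempty} => f Γ.1) ∧
    (∑' Γ : {Γ : Finset (Site d) // (Γ ∩ E).Nonempty}, f Γ.1) ≤ (E.card : ℝ) * s := by
  have hg : Summable (fun t : Σ x : {x // x ∈ E}, {Γ : Finset (Site d) // x.1 ∈ Γ} =>
      f t.2.1) :=
    (summable_sigma_of_nonneg (fun t => hf0 _)).2 ⟨fun x => hsum x.1, Summable.of_finite⟩
  have hgsum : (∑' t : Σ x : {x // x ∈ E}, {Γ : Finset (Site d) // x.1 ∈ Γ}, f t.2.1)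
      ≤ (E.card : ℝ) * s := by
    rw [Summable.tsum_sigma hg]
    calc (∑' x : {x // x ∈ E}, ∑' Γ : {Γ : Finset (Site d) // x.1 ∈ Γ}, f Γ.1)
        = ∑ x : {x // x ∈ E}, ∑' Γ : {Γ : Finset (Site d) // x.1 ∈ Γ}, f Γ.1 :=
          tsum_fintype _
      _ ≤ ∑ _x : {x // x ∈ E}, s := Finset.sum_le_sum (fun x _ => hb x.1)
      _ = (E.card : ℝ) * s := by
          rw [Finset.sum_const, Finset.card_univ, Fintype.card_coe, nsmul_eq_mul]
  let ι : {Γ : Finset (Site d) // (Γ ∩ E).Nonempty} →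
      Σ x : {x // x ∈ E}, {Γ : Finset (Site d) // x.1 ∈ Γ} := fun Γ =>
    ⟨⟨Γ.2.choose, (Finset.mem_inter.1 Γ.2.choose_spec).2⟩,
     ⟨Γ.1, (Finset.mem_inter.1 Γ.2.choose_spec).1⟩⟩
  have hι : Function.Injective ι := by
    intro a b h
    exact Subtype.ext (congrArg (fun t : Σ x : {x // x ∈ E},
      {Γ : Finset (Site d) // x.1 ∈ Γ} => t.2.1) h)
  have hF1 : Summable (fun Γ : {Γ : Finset (Site d) // (Γ ∩ E).Nonempty} => f Γ.1) :=
    hg.comp_injective hι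
  refine ⟨hF1, ?_⟩
  exact le_trans (Summable.tsum_le_tsum_of_inj ι hι (fun t _ => hf0 _) (fun Γ => le_refl _) hF1 hg) hgsum

/-- Step 2: collapsing the inner sum over `E'` produces a factor `2 ^ |Γ|`. -/
theorem step2 {d : ℕ} (E : Finset (Site d)) (u v : Finset (Site d) → ℝ)
    (hu0 : ∀ Γ, 0 ≤ u Γ)
    (huv : ∀ Γ : Finset (Site d), ((2 : ℝ) ^ Γ.card) * u Γ = v Γ)
    (hv : Summable (fun Γ : {Γ : Finset (Site d) // (Γ ∩ E).Nonempty} => v Γ.1)) :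
    Summable (fun p : {p : Finset (Site d) × Finset (Site d) //
        (p.1 ∩ E).Nonempty ∧ p.2 \ p.1 = E \ p.1} => u p.1.1) ∧
    (∑' p : {p : Finset (Site d) × Finset (Site d) //
        (p.1 ∩ E).Nonempty ∧ p.2 \ p.1 = E \ p.1}, u p.1.1)
      = ∑' Γ : {Γ : Finset (Site d) // (Γ ∩ E).Nonempty}, v Γ.1 := by
  have hfiber : ∀ Γ : {Γ : Finset (Site d) // (Γ ∩ E).Nonempty},
      (∑' _E' : {E' : Finset (Site d) // E' \ Γ.1 = E \ Γ.1}, u Γ.1) = v Γ.1 := by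
    intro Γ
    rw [tsum_fintype, Finset.sum_const, Finset.card_univ, fiber_card, nsmul_eq_mul,
      ← huv Γ.1]
    push_cast
    ring
  have hFsum : Summable (fun q : Σ Γ : {Γ : Finset (Site d) // (Γ ∩ E).Nonempty},
      {E' : Finset (Site d) // E' \ Γ.1 = E \ Γ.1} => u q.1.1) := by
    refine (summable_sigma_of_nonneg (fun q => hu0 _)).2 ⟨fun Γ => Summable.of_finite, ?_⟩
    exact hv.congr (fun Γ => (hfiber Γ).symm)
  have hcomp : (fun p : {p : Finset (Site d) × Finset (Site d) //
        (p.1 ∩ E).Nonempty ∧ p.2 \ p.1 = E \ p.1} => u p.1.1)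
      = (fun q : Σ Γ : {Γ : Finset (Site d) // (Γ ∩ E).Nonempty},
          {E' : Finset (Site d) // E' \ Γ.1 = E \ Γ.1} => u q.1.1) ∘ (pairEquiv E) := rfl
  constructor
  · rw [hcomp]
    exact hFsum.comp_injective (pairEquiv E).injective
  · rw [hcomp, Function.comp_def]
    exact ((pairEquiv E).tsum_eq (fun q : Σ Γ : {Γ : Finset (Site d) // (Γ ∩ E).Nonempty},
        {E' : Finset (Site d) // E' \ Γ.1 = E \ Γ.1} => u q.1.1)).trans
      ((Summable.tsum_sigma hFsum).trans (tsum_congr hfiber))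

/-- The single-step sum bound in the proof of Lemma 2. -/
theorem single_step_sum_bound (d : ℕ) (hd : 1 ≤ d)
    (w : Finset (Site d) → ℝ) (hw : ∀ Γ, 0 ≤ w Γ) (hwempty : w ∅ = 0)
    (l'' l c : ℝ) (hl'' : 0 < l'') (hc : 0 < c)
    (hl : 1 / l = Real.log 2 + 1 / l'')
    (s : ℝ)
    (hsummable : ∀ x : Site d, Summable fun Γ : {Γ : Finset (Site d) // x ∈ Γ} =>
      Real.exp ((Γ.1.card : ℝ) / l) * w Γ.1)
    (hs : ∀ x : Site d,
      (∑' Γ : {Γ : Finset (Site d) // x ∈ Γ}, Real.exp ((Γ.1.card : ℝ) / l) * w Γ.1) ≤ s) :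
    ∀ E : Finset (Site d), E.Nonempty →
      Summable (fun p : {p : Finset (Site d) × Finset (Site d) //
            (p.1 ∩ E).Nonempty ∧ p.2 \ p.1 = E \ p.1} =>
        Real.exp ((p.1.1.card : ℝ) / l'') * w p.1.1 / (c * (E.card : ℝ))) ∧
      (∑' p : {p : Finset (Site d) × Finset (Site d) //
            (p.1 ∩ E).Nonempty ∧ p.2 \ p.1 = E \ p.1},
        Real.exp ((p.1.1.card : ℝ) / l'') * w p.1.1 / (c * (E.card : ℝ))) ≤ s / c := by
  intro E hE
  have hEcard : (0 : ℝ) < (E.card : ℝ) := by exact_mod_cast Finset.card_pos.2 hE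
  have hkey : ∀ Γ : Finset (Site d),
      (2 : ℝ) ^ Γ.card * (Real.exp ((Γ.card : ℝ) / l'') * w Γ / (c * (E.card : ℝ)))
        = Real.exp ((Γ.card : ℝ) / l) * w Γ / (c * (E.card : ℝ)) := by
    intro Γ
    have h1 : (Γ.card : ℝ) / l = (Γ.card : ℝ) * Real.log 2 + (Γ.card : ℝ) / l'' := by
      rw [div_eq_mul_one_div, hl, mul_add, ← div_eq_mul_one_div]
    rw [h1, Real.exp_add, Real.exp_nat_mul, Real.exp_log (by norm_num : (0:ℝ) < 2)]
    ring
  -- step 1 applied to f Γ = exp(|Γ|/l) w Γ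
  obtain ⟨h1sum, h1le⟩ := step1 E (fun Γ => Real.exp ((Γ.card : ℝ) / l) * w Γ)
    (fun Γ => mul_nonneg (Real.exp_pos _).le (hw Γ)) s hsummable hs
  -- step 2 applied to u, v
  obtain ⟨h2sum, h2eq⟩ := step2 E
    (fun Γ => Real.exp ((Γ.card : ℝ) / l'') * w Γ / (c * (E.card : ℝ)))
    (fun Γ => Real.exp ((Γ.card : ℝ) / l) * w Γ / (c * (E.card : ℝ)))
    (fun Γ => div_nonneg (mul_nonneg (Real.exp_pos _).le (hw Γ))
      (mul_nonneg hc.le hEcard.le))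
    hkey
    (h1sum.div_const (c * (E.card : ℝ)))
  refine ⟨h2sum, ?_⟩
  rw [h2eq]
  have htsum_div : (∑' Γ : {Γ : Finset (Site d) // (Γ ∩ E).Nonempty},
      Real.exp ((Γ.1.card : ℝ) / l) * w Γ.1 / (c * (E.card : ℝ)))
      = (∑' Γ : {Γ : Finset (Site d) // (Γ ∩ E).Nonempty},
        Real.exp ((Γ.1.card : ℝ) / l) * w Γ.1) / (c * (E.card : ℝ)) := tsum_div_const
  rw [htsum_div]
  calc (∑' Γ : {Γ : Finset (Site d) // (Γ ∩ E).Nonempty},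
        Real.exp ((Γ.1.card : ℝ) / l) * w Γ.1) / (c * (E.card : ℝ))
      ≤ ((E.card : ℝ) * s) / (c * (E.card : ℝ)) :=
        div_le_div_of_nonneg_right h1le (mul_pos hc hEcard).le |>.trans_eq rfl
    _ = s / c := by
        rw [mul_comm c (E.card : ℝ), mul_div_mul_left s c hEcard.ne']

end QMS
end
end
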